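/- For an associative unital k-algebra A, a commutative unital k-algebra B, an algebra morphism ε : B → A with ε(B) contained in the center of A, and an A-bimodule M that is B-symmetric, the secondary Hochschild coboundary maps δ_n^ε : Hom_k(A^{⊗n} ⊗ B^{⊗ n(n-1)/2}, M) → Hom_k(A^{⊗(n+1)} ⊗ B^{⊗ n(n+1)/2}, M) satisfy δ_{n+1}^ε ∘ δ_n^ε = 0, so (C^•((A,B,ε);M), δ^ε) is a cochain complex. -/

import Mathlib

/-!
STATEMENT 0: The secondary Hochschild coboundary maps
δ_n^ε : Hom_k(A^{⊗n} ⊗ B^{⊗ n(n-1)/2}, M) → Hom_k(A^{⊗(n+1)} ⊗ B^{⊗ n(n+1)/2}, M)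
satisfy δ_{n+1}^ε ∘ δ_n^ε = 0.

We model Hom_k(A^{⊗n} ⊗ B^{⊗ n(n-1)/2}, M) faithfully as the space of k-linear maps
out of the tensor product `(⨂_{i : Fin n} A) ⊗ (⨂_{(i,j), i<j} B)` (the matrix
representation: diagonal entries a_0,…,a_{n-1} ∈ A and entries b_{i,j} ∈ B for i<j).
The coboundary δ is any family of maps satisfying the defining formula of the paper on
the (spanning) pure tensors; the theorem asserts δ∘δ = 0 for such a family.
-/

open scoped TensorProduct
open MulOpposite PiTensorProduct

noncomputable section

/-- Index set for the strictly upper triangular positions of an `m × m` matrix. -/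
abbrev UT (m : ℕ) := {p : Fin m × Fin m // p.1 < p.2}

/-- The tensor space `A^{⊗ m} ⊗ B^{⊗ m(m-1)/2}` in its matrix representation. -/
def TS (k A B : Type) [Field k] [Ring A] [Algebra k A] [CommRing B] [Algebra k B]
    (m : ℕ) : Type :=
  (⨂[k] _ : Fin m, A) ⊗[k] (⨂[k] _ : UT m, B)

variable (k A B : Type) [Field k] [Ring A] [Algebra k A] [CommRing B] [Algebra k B]

instance (m : ℕ) : AddCommGroup (TS k A B m) :=
  inferInstanceAs (AddCommGroup ((⨂[k] _ : Fin m, A) ⊗[k] (⨂[k] _ : UT m, B)))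

instance (m : ℕ) : Module k (TS k A B m) :=
  inferInstanceAs (Module k ((⨂[k] _ : Fin m, A) ⊗[k] (⨂[k] _ : UT m, B)))

/-- The pure tensor (generator) determined by diagonal entries `a` and
upper-triangular entries `β` (read at indices `< m`). -/
def gen (m : ℕ) (a : ℕ → A) (β : ℕ → ℕ → B) : TS k A B m :=
  (tprod k fun i : Fin m => a i) ⊗ₜ[k] (tprod k fun p : UT m => β p.1.1 p.1.2)

/-- The diagonal of the matrix obtained by merging the diagonal entries `i` and `i+1`
via `a_i a_{i+1} ε(b_{i,i+1})`. -/
def mergeA (ε : B →ₐ[k] A) (i : ℕ) (a : ℕ → A) (β : ℕ → ℕ → B) : ℕ → A :=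
  fun j => if j < i then a j else if j = i then a i * a (i + 1) * ε (β i (i + 1)) else a (j + 1)

/-- Preimages of the index `p` under the monotone surjection collapsing `i` and `i+1`. -/
def preim (i p : ℕ) : Finset ℕ :=
  if p < i then {p} else if p = i then {i, i + 1} else {p + 1}

/-- The `B`-entries of the matrix obtained by merging rows/columns `i` and `i+1`
(products of the corresponding old entries). -/
def mergeB (i : ℕ) (β : ℕ → ℕ → B) : ℕ → ℕ → B :=
  fun p q => ∏ u ∈ preim i p, ∏ v ∈ preim i q, β u v

/-! ### Auxiliary material for the proof -/

section Aux

lemma mem_preim {i p x : ℕ} :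
    x ∈ preim i p ↔ (p < i ∧ x = p) ∨ (p = i ∧ (x = i ∨ x = i + 1)) ∨ (i < p ∧ x = p + 1) := by
  unfold preim; split_ifs with h1 h2 <;> simp <;> omega

lemma preim_pd (i : ℕ) (s : Finset ℕ) : (↑s : Set ℕ).PairwiseDisjoint (preim i) := by
  intro u _ v _ huv
  rw [Function.onFun, Finset.disjoint_left]
  intro x hx hx'
  rw [mem_preim] at hx hx'
  omega

lemma biUnion_preim_range {i m : ℕ} (h : i < m) :
    (Finset.range m).biUnion (preim i) = Finset.range (m + 1) := by
  ext x
  simp only [Finset.mem_biUnion, Finset.mem_range, mem_preim]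
  constructor
  · rintro ⟨u, hu, hx⟩; omega
  · intro hx
    refine ⟨if x ≤ i then x else if x = i + 1 then i else x - 1, by split_ifs <;> omega,
      by split_ifs <;> omega⟩

lemma biUnion_preim_Icc {i m : ℕ} (h1 : 1 ≤ i) (h2 : i ≤ m) :
    (Finset.Icc 1 m).biUnion (preim i) = Finset.Icc 1 (m + 1) := by
  ext x
  simp only [Finset.mem_biUnion, Finset.mem_Icc, mem_preim]
  constructor
  · rintro ⟨u, hu, hx⟩; omega
  · intro hx
    refine ⟨if x ≤ i then x else if x = i + 1 then i else x - 1, by split_ifs <;> omega,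
      by split_ifs <;> omega⟩

lemma preim_comp {p q : ℕ} (h : p ≤ q) (r : ℕ) :
    (preim q r).biUnion (preim p) = (preim p r).biUnion (preim (q + 1)) := by
  ext x
  simp only [Finset.mem_biUnion, mem_preim]
  constructor
  · rintro ⟨u, hu, hx⟩
    refine ⟨if r < p then r else if r = p then min x (p + 1) else r + 1, ?_, ?_⟩ <;>
      split_ifs <;> omega
  · rintro ⟨u, hu, hx⟩
    refine ⟨if r < p then r else if r = p then (if x ≤ p + 1 then p else p + 1)
      else if r < q then r else if r = q then x - 1 else r + 1, ?_, ?_⟩ <;>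
      split_ifs <;> omega

lemma prod_preim (i p : ℕ) (g : ℕ → B) :
    ∏ u ∈ preim i p, g u =
      if p < i then g p else if p = i then g i * g (i + 1) else g (p + 1) := by
  unfold preim
  split_ifs with h1 h2
  · simp
  · rw [Finset.prod_insert (by simp), Finset.prod_singleton]
  · simp

lemma double_prod (s t : Finset ℕ) (i : ℕ) (g : ℕ → ℕ → B) :
    (∏ x ∈ s, ∏ y ∈ t, ∏ w ∈ preim i x, ∏ z ∈ preim i y, g w z)
      = ∏ w ∈ s.biUnion (preim i), ∏ z ∈ t.biUnion (preim i), g w z := by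
  rw [Finset.prod_biUnion (preim_pd i s)]
  refine Finset.prod_congr rfl fun x _ => ?_
  rw [Finset.prod_comm]
  exact Finset.prod_congr rfl fun w _ => (Finset.prod_biUnion (preim_pd i t)).symm

lemma mergeB_comm {p q : ℕ} (h : p ≤ q) (β : ℕ → ℕ → B) (u v : ℕ) :
    mergeB B q (mergeB B p β) u v = mergeB B p (mergeB B (q + 1) β) u v := by
  unfold mergeB
  rw [double_prod, double_prod, preim_comp h, preim_comp h]

end Aux

section Aux2

def shiftA (a : ℕ → A) : ℕ → A := fun j => a (j + 1)

def shiftB (β : ℕ → ℕ → B) : ℕ → ℕ → B := fun p q => β (p + 1) (q + 1)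

def Lsc (ε : B →ₐ[k] A) (m : ℕ) (a : ℕ → A) (β : ℕ → ℕ → B) : A :=
  a 0 * ε (∏ j ∈ Finset.Icc 1 m, β 0 j)

def Rsc (ε : B →ₐ[k] A) (m : ℕ) (a : ℕ → A) (β : ℕ → ℕ → B) : A :=
  a m * ε (∏ j ∈ Finset.range m, β j m)

lemma gen_congr (m : ℕ) {a a' : ℕ → A} {β β' : ℕ → ℕ → B}
    (ha : ∀ j < m, a j = a' j) (hβ : ∀ p q, p < q → q < m → β p q = β' p q) :
    gen k A B m a β = gen k A B m a' β' := by
  unfold gen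
  congr 1
  · exact congrArg _ (funext fun i => ha i i.2)
  · exact congrArg _ (funext fun p => hβ p.1.1 p.1.2 p.2 p.1.2.2)

variable (ε : B →ₐ[k] A)

lemma mergeA_lt {i j : ℕ} (h : j < i) (a : ℕ → A) (β : ℕ → ℕ → B) :
    mergeA k A B ε i a β j = a j := if_pos h

lemma mergeA_eq (i : ℕ) (a : ℕ → A) (β : ℕ → ℕ → B) :
    mergeA k A B ε i a β i = a i * a (i + 1) * ε (β i (i + 1)) := by
  unfold mergeA; rw [if_neg (lt_irrefl i), if_pos rfl]

lemma mergeA_gt {i j : ℕ} (h : i < j) (a : ℕ → A) (β : ℕ → ℕ → B) :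
    mergeA k A B ε i a β j = a (j + 1) := by
  unfold mergeA; rw [if_neg (by omega), if_neg (by omega)]

lemma shiftA_mergeA (i : ℕ) (a : ℕ → A) (β : ℕ → ℕ → B) (j : ℕ) :
    shiftA A (mergeA k A B ε (i + 1) a β) j = mergeA k A B ε i (shiftA A a) (shiftB B β) j := by
  unfold shiftA shiftB mergeA
  split_ifs <;> first | rfl | omega | exact False.elim ‹False›

lemma shiftB_mergeB (i : ℕ) (β : ℕ → ℕ → B) (p q : ℕ) :
    shiftB B (mergeB B (i + 1) β) p q = mergeB B i (shiftB B β) p q := by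
  unfold shiftB mergeB
  simp only [prod_preim]
  split_ifs <;> first | rfl | omega | exact False.elim ‹False›

lemma shiftA_mergeA0 (a : ℕ → A) (β : ℕ → ℕ → B) (j : ℕ) :
    shiftA A (mergeA k A B ε 0 a β) j = shiftA A (shiftA A a) j := by
  unfold shiftA mergeA
  simp

lemma shiftB_mergeB0 (β : ℕ → ℕ → B) (p q : ℕ) :
    shiftB B (mergeB B 0 β) p q = shiftB B (shiftB B β) p q := by
  unfold shiftB mergeB
  simp only [prod_preim]
  split_ifs <;> first | rfl | omega | exact False.elim ‹False›

lemma mergeA_comm (hcent : ∀ (b : B) (x : A), ε b * x = x * ε b) {p q : ℕ} (h : p ≤ q)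
    (a : ℕ → A) (β : ℕ → ℕ → B) (j : ℕ) :
    mergeA k A B ε q (mergeA k A B ε p a β) (mergeB B p β) j
      = mergeA k A B ε p (mergeA k A B ε (q + 1) a β) (mergeB B (q + 1) β) j := by
  have key : ∀ (x y : A) (b : B), x * ε b * y = x * y * ε b := fun x y b => by
    rw [mul_assoc, hcent, ← mul_assoc]
  rcases lt_trichotomy j p with h1 | rfl | h1
  · rw [mergeA_lt k A B ε (show j < q by omega), mergeA_lt k A B ε h1,
      mergeA_lt k A B ε h1, mergeA_lt k A B ε (show j < q + 1 by omega)]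
  · rcases eq_or_lt_of_le h with rfl | hpq
    · rw [mergeA_eq, mergeA_eq,
        mergeA_eq k A B ε j (mergeA k A B ε (j + 1) a β) (mergeB B (j + 1) β),
        mergeA_lt k A B ε (lt_add_one j), mergeA_eq, mergeA_gt k A B ε (lt_add_one j) a β]
      unfold mergeB
      simp only [prod_preim]
      split_ifs <;> try omega
      rw [key (a j * a (j + 1)) (a (j + 1 + 1)) (β j (j + 1)), mul_assoc _ (ε (β j (j + 1))),
        ← _root_.map_mul, ← mul_assoc (a j) (a (j + 1) * a (j + 1 + 1)) (ε (β (j + 1) (j + 1 + 1))),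
        ← mul_assoc (a j) (a (j + 1)) (a (j + 1 + 1)),
        mul_assoc _ (ε (β (j + 1) (j + 1 + 1))), ← _root_.map_mul]
      congr 1
      ring
    · rw [mergeA_lt k A B ε hpq, mergeA_eq, mergeA_eq, mergeA_lt k A B ε (show j < q + 1 by omega),
        mergeA_lt k A B ε (show j + 1 < q + 1 by omega)]
      unfold mergeB
      simp only [prod_preim]
      split_ifs <;> first | rfl | omega | exact False.elim ‹False›
  · rcases lt_trichotomy j q with h2 | rfl | h2
    · rw [mergeA_lt k A B ε h2, mergeA_gt k A B ε h1, mergeA_gt k A B ε h1,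
        mergeA_lt k A B ε (show j + 1 < q + 1 by omega)]
    · rw [mergeA_eq, mergeA_gt k A B ε h1, mergeA_gt k A B ε (show p < j + 1 by omega),
        mergeA_gt k A B ε h1, mergeA_eq]
      unfold mergeB
      simp only [prod_preim]
      split_ifs <;> first | rfl | omega
    · rw [mergeA_gt k A B ε h2, mergeA_gt k A B ε (show p < j + 1 by omega),
        mergeA_gt k A B ε h1, mergeA_gt k A B ε (show q + 1 < j + 1 by omega)]

end Aux2

section Aux3

lemma Icc_prod (m : ℕ) (g : ℕ → B) :
    ∏ j ∈ Finset.Icc 1 m, g j = ∏ j ∈ Finset.range m, g (j + 1) := by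
  rw [← Finset.Ico_add_one_right_eq_Icc, Finset.prod_Ico_eq_prod_range]
  simp only [Nat.succ_sub_one, Nat.add_sub_cancel]
  exact Finset.prod_congr rfl fun j _ => by rw [add_comm]

lemma sum_sign_cancel {M' : Type} [AddCommGroup M'] (N : ℕ) (G : ℕ → ℕ → M')
    (hG : ∀ i j, i ≤ j → j ≤ N → G i j = G (j + 1) i) :
    ∑ i ∈ Finset.range (N + 2), ∑ j ∈ Finset.range (N + 1), (-1 : ℤ) ^ (i + j) • G i j = 0 := by
  rw [← Finset.sum_product']
  set s := (Finset.range (N + 2)) ×ˢ (Finset.range (N + 1)) with hs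
  rw [← Finset.sum_filter_add_sum_filter_not s (fun p => p.1 ≤ p.2)
    (fun p => (-1 : ℤ) ^ (p.1 + p.2) • G p.1 p.2)]
  have key : ∑ p ∈ s.filter (fun p => p.1 ≤ p.2), (-1 : ℤ) ^ (p.1 + p.2) • G p.1 p.2
      = ∑ p ∈ s.filter (fun p => ¬ p.1 ≤ p.2), (-((-1 : ℤ) ^ (p.1 + p.2) • G p.1 p.2)) := by
    refine Finset.sum_nbij' (fun p => (p.2 + 1, p.1)) (fun p => (p.2, p.1 - 1)) ?_ ?_ ?_ ?_ ?_
    · intro p hp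
      simp only [hs, Finset.mem_filter, Finset.mem_product, Finset.mem_range] at hp ⊢
      omega
    · intro p hp
      simp only [hs, Finset.mem_filter, Finset.mem_product, Finset.mem_range] at hp ⊢
      omega
    · intro p hp
      rfl
    · intro p hp
      simp only [hs, Finset.mem_filter, Finset.mem_product, Finset.mem_range] at hp
      have : (p.1 - 1 + 1, p.2) = p := by
        have : p.1 - 1 + 1 = p.1 := by omega
        rw [this]
      exact this
    · intro p hp
      simp only [hs, Finset.mem_filter, Finset.mem_product, Finset.mem_range] at hp
      rw [← hG p.1 p.2 hp.2 (by omega)]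
      have : p.2 + 1 + p.1 = (p.1 + p.2) + 1 := by omega
      rw [this, pow_succ, mul_smul]
      simp
  rw [key]
  rw [Finset.sum_neg_distrib]
  exact neg_add_cancel _

variable (M : Type) [AddCommGroup M] [Module k M] [Module A M] [Module Aᵐᵒᵖ M]
    [IsScalarTower k A M] [SMulCommClass A Aᵐᵒᵖ M] (ε : B →ₐ[k] A)

/-- The `j`-th unsigned face term in the secondary Hochschild coboundary. -/
def face (n : ℕ) (f : TS k A B n →ₗ[k] M) (a : ℕ → A) (β : ℕ → ℕ → B) (j : ℕ) : M :=
  if j = 0 then Lsc k A B ε n a β • f (gen k A B n (shiftA A a) (shiftB B β))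
  else if j ≤ n then f (gen k A B n (mergeA k A B ε (j - 1) a β) (mergeB B (j - 1) β))
  else op (Rsc k A B ε n a β) • f (gen k A B n a β)

/-- The `(i,j)` double face term. -/
def Gterm (n : ℕ) (f : TS k A B n →ₗ[k] M) (a : ℕ → A) (β : ℕ → ℕ → B) (i j : ℕ) : M :=
  if i = 0 then Lsc k A B ε (n + 1) a β • face k A B M ε n f (shiftA A a) (shiftB B β) j
  else if i ≤ n + 1 then face k A B M ε n f (mergeA k A B ε (i - 1) a β) (mergeB B (i - 1) β) j
  else op (Rsc k A B ε (n + 1) a β) • face k A B M ε n f a β j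

lemma face_0 (n : ℕ) (f : TS k A B n →ₗ[k] M) (a : ℕ → A) (β : ℕ → ℕ → B) :
    face k A B M ε n f a β 0
      = Lsc k A B ε n a β • f (gen k A B n (shiftA A a) (shiftB B β)) := if_pos rfl

lemma face_mid {n j : ℕ} (h1 : 1 ≤ j) (h2 : j ≤ n) (f : TS k A B n →ₗ[k] M)
    (a : ℕ → A) (β : ℕ → ℕ → B) :
    face k A B M ε n f a β j
      = f (gen k A B n (mergeA k A B ε (j - 1) a β) (mergeB B (j - 1) β)) := by
  unfold face; rw [if_neg (by omega), if_pos h2]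

lemma face_last (n : ℕ) (f : TS k A B n →ₗ[k] M) (a : ℕ → A) (β : ℕ → ℕ → B) :
    face k A B M ε n f a β (n + 1)
      = op (Rsc k A B ε n a β) • f (gen k A B n a β) := by
  unfold face; rw [if_neg (by omega), if_neg (by omega)]

lemma Gterm_0 (n : ℕ) (f : TS k A B n →ₗ[k] M) (a : ℕ → A) (β : ℕ → ℕ → B) (j : ℕ) :
    Gterm k A B M ε n f a β 0 j
      = Lsc k A B ε (n + 1) a β • face k A B M ε n f (shiftA A a) (shiftB B β) j := if_pos rfl

lemma Gterm_mid {n i : ℕ} (h1 : 1 ≤ i) (h2 : i ≤ n + 1) (f : TS k A B n →ₗ[k] M)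
    (a : ℕ → A) (β : ℕ → ℕ → B) (j : ℕ) :
    Gterm k A B M ε n f a β i j
      = face k A B M ε n f (mergeA k A B ε (i - 1) a β) (mergeB B (i - 1) β) j := by
  unfold Gterm; rw [if_neg (by omega), if_pos h2]

lemma Gterm_last (n : ℕ) (f : TS k A B n →ₗ[k] M) (a : ℕ → A) (β : ℕ → ℕ → B) (j : ℕ) :
    Gterm k A B M ε n f a β (n + 2) j
      = op (Rsc k A B ε (n + 1) a β) • face k A B M ε n f a β j := by
  unfold Gterm; rw [if_neg (by omega), if_neg (by omega)]

end Aux3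

section Aux4

variable (M : Type) [AddCommGroup M] [Module k M] [Module A M] [Module Aᵐᵒᵖ M]
    [IsScalarTower k A M] [SMulCommClass A Aᵐᵒᵖ M] (ε : B →ₐ[k] A)

lemma delta_apply
    (δ : ∀ n : ℕ, (TS k A B n →ₗ[k] M) → (TS k A B (n + 1) →ₗ[k] M))
    (hδ : ∀ (n : ℕ) (f : TS k A B n →ₗ[k] M) (a : ℕ → A) (β : ℕ → ℕ → B),
      δ n f (gen k A B (n + 1) a β) =
        (a 0 * ε (∏ j ∈ Finset.Icc 1 n, β 0 j)) •
            f (gen k A B n (fun j => a (j + 1)) (fun p q => β (p + 1) (q + 1)))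
        + (∑ i ∈ Finset.range n, (-1 : ℤ) ^ (i + 1) •
            f (gen k A B n (mergeA k A B ε i a β) (mergeB B i β)))
        + (-1 : ℤ) ^ (n + 1) •
            (op (a n * ε (∏ j ∈ Finset.range n, β j n)) • f (gen k A B n a β)))
    (n : ℕ) (f : TS k A B n →ₗ[k] M) (a : ℕ → A) (β : ℕ → ℕ → B) :
    δ n f (gen k A B (n + 1) a β)
      = ∑ j ∈ Finset.range (n + 2), (-1 : ℤ) ^ j • face k A B M ε n f a β j := by
  rw [hδ, Finset.sum_range_succ, Finset.sum_range_succ', face_last]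
  have h0 : (-1 : ℤ) ^ 0 • face k A B M ε n f a β 0
      = (a 0 * ε (∏ j ∈ Finset.Icc 1 n, β 0 j)) •
          f (gen k A B n (shiftA A a) (shiftB B β)) := by
    rw [pow_zero, one_smul, face_0]
    rfl
  have hm : ∀ j ∈ Finset.range n, (-1 : ℤ) ^ (j + 1) • face k A B M ε n f a β (j + 1)
      = (-1 : ℤ) ^ (j + 1) • f (gen k A B n (mergeA k A B ε j a β) (mergeB B j β)) := by
    intro j hj
    rw [face_mid k A B M ε (by omega) (by simpa using Finset.mem_range.1 hj), Nat.add_sub_cancel]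
  rw [Finset.sum_congr rfl hm, h0]
  rw [show (fun j => a (j + 1)) = shiftA A a from rfl,
    show (fun p q => β (p + 1) (q + 1)) = shiftB B β from rfl]
  simp only [Rsc]
  abel

lemma face_expand
    (δ : ∀ n : ℕ, (TS k A B n →ₗ[k] M) → (TS k A B (n + 1) →ₗ[k] M))
    (hδ : ∀ (n : ℕ) (f : TS k A B n →ₗ[k] M) (a : ℕ → A) (β : ℕ → ℕ → B),
      δ n f (gen k A B (n + 1) a β) =
        (a 0 * ε (∏ j ∈ Finset.Icc 1 n, β 0 j)) •
            f (gen k A B n (fun j => a (j + 1)) (fun p q => β (p + 1) (q + 1)))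
        + (∑ i ∈ Finset.range n, (-1 : ℤ) ^ (i + 1) •
            f (gen k A B n (mergeA k A B ε i a β) (mergeB B i β)))
        + (-1 : ℤ) ^ (n + 1) •
            (op (a n * ε (∏ j ∈ Finset.range n, β j n)) • f (gen k A B n a β)))
    (n : ℕ) (f : TS k A B n →ₗ[k] M) (a : ℕ → A) (β : ℕ → ℕ → B) (i : ℕ) :
    face k A B M ε (n + 1) (δ n f) a β i
      = ∑ j ∈ Finset.range (n + 2), (-1 : ℤ) ^ j • Gterm k A B M ε n f a β i j := by
  rcases Nat.eq_zero_or_pos i with rfl | hi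
  · rw [face_0, delta_apply k A B M ε δ hδ n f, Finset.smul_sum]
    refine Finset.sum_congr rfl fun j hj => ?_
    rw [Gterm_0, smul_comm]
  · rcases le_or_gt i (n + 1) with h | h
    · rw [face_mid k A B M ε hi h, delta_apply k A B M ε δ hδ n f]
      refine Finset.sum_congr rfl fun j hj => ?_
      rw [Gterm_mid k A B M ε hi h]
    · have hf : face k A B M ε (n + 1) (δ n f) a β i
          = op (Rsc k A B ε (n + 1) a β) • (δ n f) (gen k A B (n + 1) a β) := by
        unfold face; rw [if_neg (by omega), if_neg (by omega)]
      have hG : ∀ j, Gterm k A B M ε n f a β i j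
          = op (Rsc k A B ε (n + 1) a β) • face k A B M ε n f a β j := by
        intro j; unfold Gterm; rw [if_neg (by omega), if_neg (by omega)]
      rw [hf, delta_apply k A B M ε δ hδ n f, Finset.smul_sum]
      refine Finset.sum_congr rfl fun j hj => ?_
      rw [hG, smul_comm]

lemma G_symm (hcent : ∀ (b : B) (x : A), ε b * x = x * ε b)
    (hsym : ∀ (b : B) (m : M), (ε b) • m = (op (ε b)) • m)
    (n : ℕ) (f : TS k A B n →ₗ[k] M) (a : ℕ → A) (β : ℕ → ℕ → B) :
    ∀ i j, i ≤ j → j ≤ n + 1 →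
      Gterm k A B M ε n f a β i j = Gterm k A B M ε n f a β (j + 1) i := by
  have key : ∀ (x y : A) (b : B), x * ε b * y = x * y * ε b := fun x y b => by
    rw [mul_assoc, hcent, ← mul_assoc]
  have opop : ∀ (x y : A) (v : M), op x • op y • v = op (y * x) • v := fun x y v => by
    rw [← mul_smul, ← op_mul]
  have transfer : ∀ (b : B) (x y : A) (v : M),
      (x * ε b) • op y • v = x • op (y * ε b) • v := by
    intro b x y v
    rw [mul_smul, smul_comm (ε b) (op y) v, hsym, opop, hcent]
  have shuffle : ∀ (x y : A) (c d : B), x * ε c * (y * ε d) = x * y * ε (c * d) := by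
    intro x y c d
    rw [← mul_assoc (x * ε c) y (ε d), key x y c, mul_assoc (x * y) (ε c) (ε d),
      ← _root_.map_mul]
  intro i j hij hj
  rcases Nat.eq_zero_or_pos i with rfl | hi
  · rcases Nat.eq_zero_or_pos j with rfl | hj0
    · -- case (0,0)
      rw [Gterm_0, Gterm_mid k A B M ε le_rfl (by omega), face_0, face_0, Nat.sub_self]
      have hgen : gen k A B n (shiftA A (mergeA k A B ε 0 a β)) (shiftB B (mergeB B 0 β))
          = gen k A B n (shiftA A (shiftA A a)) (shiftB B (shiftB B β)) :=
        gen_congr k A B n (fun j _ => shiftA_mergeA0 k A B ε a β j)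
          (fun p q _ _ => shiftB_mergeB0 B β p q)
      rw [hgen, ← mul_smul]
      congr 1
      unfold Lsc
      rw [mergeA_eq]
      have hS : ∀ q ∈ Finset.Icc 1 n, mergeB B 0 β 0 q = β 0 (q + 1) * β (0 + 1) (q + 1) := by
        intro q hq
        have : 1 ≤ q := (Finset.mem_Icc.1 hq).1
        unfold mergeB
        simp only [prod_preim]
        split_ifs <;> first | rfl | omega | exact False.elim ‹False›
      rw [Finset.prod_congr rfl hS, Finset.prod_mul_distrib]
      simp only [shiftA, shiftB]
      simp only [Icc_prod]
      rw [Finset.prod_range_succ' (fun x => β 0 (x + 1)) n]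
      rw [shuffle, mul_assoc (a 0 * a (0 + 1)), ← _root_.map_mul]
      congr 1
      exact congrArg ε (by ring)
    · rcases eq_or_lt_of_le hj with rfl | hjn
      · -- case (0, n+1)
        rw [Gterm_0, Gterm_last, face_last, face_0]
        have hL : Lsc k A B ε (n + 1) a β = Lsc k A B ε n a β * ε (β 0 (n + 1)) := by
          unfold Lsc
          rw [Finset.prod_Icc_succ_top (by omega), _root_.map_mul, ← mul_assoc]
        rw [hL, transfer, smul_comm]
        congr 2
        unfold Rsc
        simp only [shiftA, shiftB]
        rw [mul_assoc, ← _root_.map_mul, Finset.prod_range_succ' (fun q => β q (n + 1)) n]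
      · -- case (0, j), 1 ≤ j ≤ n
        obtain ⟨j', rfl⟩ : ∃ j'', j = j'' + 1 := ⟨j - 1, by omega⟩
        have hj'n : j' + 1 ≤ n := by omega
        rw [Gterm_0, Gterm_mid k A B M ε (by omega) (by omega),
          face_mid k A B M ε hj0 hj'n, face_0, Nat.add_sub_cancel, Nat.add_sub_cancel]
        have hgen : gen k A B n (shiftA A (mergeA k A B ε (j' + 1) a β))
              (shiftB B (mergeB B (j' + 1) β))
            = gen k A B n (mergeA k A B ε j' (shiftA A a) (shiftB B β))
              (mergeB B j' (shiftB B β)) :=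
          gen_congr k A B n (fun t _ => shiftA_mergeA k A B ε j' a β t)
            (fun u v _ _ => shiftB_mergeB B j' β u v)
        rw [hgen]
        congr 1
        unfold Lsc
        rw [mergeA_lt k A B ε (by omega)]
        congr 2
        calc ∏ u ∈ Finset.Icc 1 (n + 1), β 0 u
            = ∏ v ∈ (Finset.Icc 1 n).biUnion (preim (j' + 1)), β 0 v := by
              rw [biUnion_preim_Icc (by omega) (by omega)]
          _ = ∏ u ∈ Finset.Icc 1 n, ∏ v ∈ preim (j' + 1) u, β 0 v :=
              Finset.prod_biUnion (preim_pd _ _)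
          _ = ∏ u ∈ Finset.Icc 1 n, mergeB B (j' + 1) β 0 u := by
              refine Finset.prod_congr rfl fun u _ => ?_
              unfold mergeB
              rw [prod_preim B (j' + 1) 0 (fun w => ∏ v ∈ preim (j' + 1) u, β w v),
                if_pos (by omega)]
  · rcases eq_or_lt_of_le hj with rfl | hjn
    · rcases eq_or_lt_of_le hij with rfl | hij'
      · -- case (n+1, n+1)
        rw [Gterm_mid k A B M ε (by omega) le_rfl, Gterm_last, Nat.add_sub_cancel,
          face_last, face_last, opop]
        have hgen : gen k A B n (mergeA k A B ε n a β) (mergeB B n β) = gen k A B n a β := by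
          refine gen_congr k A B n (fun t ht => mergeA_lt k A B ε ht a β) fun u v huv hv => ?_
          unfold mergeB
          simp only [prod_preim]
          split_ifs <;> first | rfl | omega | exact False.elim ‹False›
        rw [hgen]
        congr 2
        unfold Rsc
        rw [mergeA_eq]
        have hS : ∀ q ∈ Finset.range n, mergeB B n β q n = β q n * β q (n + 1) := by
          intro q hq
          have : q < n := Finset.mem_range.1 hq
          unfold mergeB
          simp only [prod_preim]
          split_ifs <;> first | rfl | omega | exact False.elim ‹False›
        rw [Finset.prod_congr rfl hS, Finset.prod_mul_distrib, shuffle,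
          Finset.prod_range_succ (fun q => β q (n + 1)) n,
          mul_assoc (a n * a (n + 1)), ← _root_.map_mul]
        congr 1
        exact congrArg ε (by ring)
      · -- case (i, n+1), 1 ≤ i ≤ n
        obtain ⟨p, rfl⟩ : ∃ p, i = p + 1 := ⟨i - 1, by omega⟩
        have hpn : p < n := by omega
        rw [Gterm_mid k A B M ε (by omega) (by omega), Gterm_last, Nat.add_sub_cancel,
          face_last, face_mid k A B M ε (by omega) (by omega), Nat.add_sub_cancel]
        congr 2
        unfold Rsc
        rw [mergeA_gt k A B ε hpn]
        congr 2
        calc ∏ q ∈ Finset.range n, mergeB B p β q n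
            = ∏ q ∈ Finset.range n, ∏ u ∈ preim p q, β u (n + 1) := by
              refine Finset.prod_congr rfl fun q _ => ?_
              unfold mergeB
              refine Finset.prod_congr rfl fun u _ => ?_
              rw [prod_preim, if_neg (by omega), if_neg (by omega)]
          _ = ∏ u ∈ (Finset.range n).biUnion (preim p), β u (n + 1) :=
              (Finset.prod_biUnion (preim_pd _ _)).symm
          _ = ∏ u ∈ Finset.range (n + 1), β u (n + 1) := by
              rw [biUnion_preim_range hpn]
    · -- case (i, j), 1 ≤ i ≤ j ≤ n
      obtain ⟨p, rfl⟩ : ∃ p, i = p + 1 := ⟨i - 1, by omega⟩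
      obtain ⟨q, rfl⟩ : ∃ q, j = q + 1 := ⟨j - 1, by omega⟩
      have hpq : p ≤ q := by omega
      rw [Gterm_mid k A B M ε (by omega) (by omega), face_mid k A B M ε (by omega) (by omega),
        Nat.add_sub_cancel, Nat.add_sub_cancel,
        Gterm_mid k A B M ε (by omega) (by omega), face_mid k A B M ε (by omega) (by omega),
        Nat.add_sub_cancel, Nat.add_sub_cancel]
      exact congrArg f (gen_congr k A B n
        (fun t _ => mergeA_comm k A B ε hcent hpq a β t)
        (fun u v _ _ => mergeB_comm B hpq β u v))

end Aux4

theorem secondary_hochschild_coboundary_squares_to_zero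
    (M : Type) [AddCommGroup M] [Module k M] [Module A M] [Module Aᵐᵒᵖ M]
    [IsScalarTower k A M] [SMulCommClass A Aᵐᵒᵖ M]
    (ε : B →ₐ[k] A)
    (hcent : ∀ (b : B) (a : A), ε b * a = a * ε b)
    (hsym : ∀ (b : B) (m : M), (ε b) • m = (op (ε b)) • m)
    (δ : ∀ n : ℕ, (TS k A B n →ₗ[k] M) → (TS k A B (n + 1) →ₗ[k] M))
    (hδ : ∀ (n : ℕ) (f : TS k A B n →ₗ[k] M) (a : ℕ → A) (β : ℕ → ℕ → B),
      δ n f (gen k A B (n + 1) a β) =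
        (a 0 * ε (∏ j ∈ Finset.Icc 1 n, β 0 j)) •
            f (gen k A B n (fun j => a (j + 1)) (fun p q => β (p + 1) (q + 1)))
        + (∑ i ∈ Finset.range n, (-1 : ℤ) ^ (i + 1) •
            f (gen k A B n (mergeA k A B ε i a β) (mergeB B i β)))
        + (-1 : ℤ) ^ (n + 1) •
            (op (a n * ε (∏ j ∈ Finset.range n, β j n)) • f (gen k A B n a β))) :
    ∀ (n : ℕ) (f : TS k A B n →ₗ[k] M), δ (n + 1) (δ n f) = 0 := by
  intro n f
  have hzero : ∀ (a : ℕ → A) (β : ℕ → ℕ → B),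
      δ (n + 1) (δ n f) (gen k A B (n + 1 + 1) a β) = 0 := by
    intro a β
    rw [delta_apply k A B M ε δ hδ (n + 1) (δ n f) a β]
    have hexp : ∀ i ∈ Finset.range (n + 3),
        (-1 : ℤ) ^ i • face k A B M ε (n + 1) (δ n f) a β i
          = ∑ j ∈ Finset.range (n + 2), (-1 : ℤ) ^ (i + j) • Gterm k A B M ε n f a β i j := by
      intro i _
      rw [face_expand k A B M ε δ hδ n f a β i, Finset.smul_sum]
      exact Finset.sum_congr rfl fun j _ => by rw [smul_smul, ← pow_add]
    rw [Finset.sum_congr rfl hexp]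
    exact sum_sign_cancel (n + 1) _ (G_symm k A B M ε hcent hsym n f a β)
  refine LinearMap.ext fun z => ?_
  rw [LinearMap.zero_apply]
  induction z using TensorProduct.induction_on with
  | zero => exact map_zero _
  | add u v hu hv => erw [map_add, hu, hv, add_zero]
  | tmul x y =>
    induction x using PiTensorProduct.induction_on with
    | add u v hu hv => rw [TensorProduct.add_tmul]; erw [map_add, hu, hv, add_zero]
    | smul_tprod r g =>
      induction y using PiTensorProduct.induction_on with
      | add u v hu hv => rw [TensorProduct.tmul_add]; erw [map_add, hu, hv, add_zero]
      | smul_tprod s h =>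
        rw [← TensorProduct.smul_tmul', TensorProduct.tmul_smul]; erw [map_smul, map_smul]
        have hx : (tprod k g) ⊗ₜ[k] (tprod k h)
            = gen k A B (n + 1 + 1)
                (fun t => if ht : t < n + 1 + 1 then g ⟨t, ht⟩ else 1)
                (fun u v => if huv : u < n + 1 + 1 ∧ v < n + 1 + 1 ∧ u < v
                  then h ⟨(⟨u, huv.1⟩, ⟨v, huv.2.1⟩), huv.2.2⟩ else 1) := by
          unfold gen
          congr 1
          · refine congrArg _ (funext fun i => ?_)
            show g i = if ht : (i : ℕ) < n + 1 + 1 then g ⟨(i : ℕ), ht⟩ else 1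
            rw [dif_pos i.2]
          · refine congrArg _ (funext fun p => ?_)
            show h p = if huv : (p.1.1 : ℕ) < n + 1 + 1 ∧ (p.1.2 : ℕ) < n + 1 + 1
                ∧ (p.1.1 : ℕ) < (p.1.2 : ℕ)
              then h ⟨(⟨(p.1.1 : ℕ), huv.1⟩, ⟨(p.1.2 : ℕ), huv.2.1⟩), huv.2.2⟩ else 1
            rw [dif_pos (⟨p.1.1.2, p.1.2.2, p.2⟩ : (p.1.1 : ℕ) < n + 1 + 1
              ∧ (p.1.2 : ℕ) < n + 1 + 1 ∧ (p.1.1 : ℕ) < (p.1.2 : ℕ))]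
        rw [hx, hzero, smul_zero, smul_zero]

end
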